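/- arXiv:2103.04422 — 3 statements merged into one kernel-verified Lean document; each statement's English description precedes it below -/
import Mathlib

section
/- Let μ = Σ_{j,k=1}^N u_{j,k} δ_{(x₁^j, x₂^k)} with u_{j,k} = (1/√N) exp(2πi jk/N). Then for every (λ₁, λ₂) ∈ ℤ², the Fourier coefficient satisfies |∫ exp(-i(λ₁ t₁ + λ₂ t₂)) dμ| ≤ N. -/
open Complex Finset

lemma geom_root_sum (N : ℕ) (hN : 0 < N) (z : ℂ) (hz : z ^ N = 1) :
    ∑ j : Fin N, z ^ (j.1 + 1) = if z = 1 then (N : ℂ) else 0 := by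
  rw [Fin.sum_univ_eq_sum_range (fun j => z ^ (j + 1))]
  by_cases h1 : z = 1
  · simp [h1]
  · simp only [h1, if_false]
    have : ∑ j ∈ range N, z ^ (j + 1) = z * ∑ j ∈ range N, z ^ j := by
      rw [mul_sum]; congr 1; ext j; ring
    rw [this, geom_sum_eq h1, hz]
    simp

lemma dft_orth (N : ℕ) (hN : 0 < N) (k k' : Fin N) :
    ∑ j : Fin N, Complex.exp (2 * Real.pi * Complex.I * ((j.1 : ℂ) + 1) * ((k.1 : ℂ) + 1) / N) *
      (starRingEnd ℂ)
        (Complex.exp (2 * Real.pi * Complex.I * ((j.1 : ℂ) + 1) * ((k'.1 : ℂ) + 1) / N)) =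
    if k = k' then (N : ℂ) else 0 := by
  have hNne : (N : ℂ) ≠ 0 := Nat.cast_ne_zero.2 hN.ne'
  set z : ℂ := Complex.exp (2 * Real.pi * Complex.I * ((k.1 : ℂ) - (k'.1 : ℂ)) / N) with hzdef
  have hconj : ∀ j : Fin N,
      (starRingEnd ℂ) (2 * Real.pi * Complex.I * ((j.1 : ℂ) + 1) * ((k'.1 : ℂ) + 1) / N)
        = -(2 * Real.pi * Complex.I * ((j.1 : ℂ) + 1) * ((k'.1 : ℂ) + 1) / N) := by
    intro j
    simp [map_div₀, map_ofNat, Complex.conj_I]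
    ring
  have hterm : ∀ j : Fin N,
      Complex.exp (2 * Real.pi * Complex.I * ((j.1 : ℂ) + 1) * ((k.1 : ℂ) + 1) / N) *
      (starRingEnd ℂ)
        (Complex.exp (2 * Real.pi * Complex.I * ((j.1 : ℂ) + 1) * ((k'.1 : ℂ) + 1) / N))
      = z ^ (j.1 + 1) := by
    intro j
    rw [← Complex.exp_conj, hconj j, ← Complex.exp_add, hzdef, ← Complex.exp_nat_mul]
    congr 1
    push_cast
    field_simp
    ring
  have hzN : z ^ N = 1 := by
    rw [hzdef, ← Complex.exp_nat_mul]
    have : (N : ℂ) * (2 * Real.pi * Complex.I * ((k.1 : ℂ) - (k'.1 : ℂ)) / N)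
        = ((((k.1 : ℤ) - (k'.1 : ℤ) : ℤ)) : ℂ) * (2 * Real.pi * Complex.I) := by
      push_cast
      field_simp
    rw [this, Complex.exp_int_mul_two_pi_mul_I]
  have hz1 : z = 1 ↔ k = k' := by
    constructor
    · intro h
      rw [hzdef, Complex.exp_eq_one_iff] at h
      obtain ⟨n, hn⟩ := h
      rw [div_eq_iff hNne] at hn
      have hc : (2 * (Real.pi : ℂ) * Complex.I) ≠ 0 :=
        mul_ne_zero (mul_ne_zero two_ne_zero (Complex.ofReal_ne_zero.2 Real.pi_ne_zero))
          Complex.I_ne_zero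
      have h3 : (2 * (Real.pi : ℂ) * Complex.I) * ((k.1 : ℂ) - (k'.1 : ℂ))
          = (2 * (Real.pi : ℂ) * Complex.I) * ((n : ℂ) * N) := by
        linear_combination hn
      have h2 : ((k.1 : ℂ) - (k'.1 : ℂ)) = (n : ℂ) * N := mul_left_cancel₀ hc h3
      have h4 : (k.1 : ℤ) - (k'.1 : ℤ) = n * N := by exact_mod_cast h2
      have hd : (N : ℤ) ∣ ((k.1 : ℤ) - (k'.1 : ℤ)) := ⟨n, by rw [h4]; ring⟩
      have habs : |(k.1 : ℤ) - (k'.1 : ℤ)| < N := by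
        rw [abs_lt]
        constructor <;> [skip; skip] <;> omega
      have := Int.eq_zero_of_abs_lt_dvd hd habs
      have : k.1 = k'.1 := by omega
      exact Fin.ext this
    · intro h
      subst h
      simp [hzdef]
  calc ∑ j : Fin N, _ = ∑ j : Fin N, z ^ (j.1 + 1) := by
        exact Finset.sum_congr rfl fun j _ => hterm j
    _ = if z = 1 then (N : ℂ) else 0 := geom_root_sum N hN z hzN
    _ = if k = k' then (N : ℂ) else 0 := if_congr hz1 rfl rfl

/-- For `μ = Σ_{j,k=1}^N u_{j,k} δ_{(x₁^j, x₂^k)}` with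
`u_{j,k} = (1/√N) exp(2πi jk/N)`, every Fourier coefficient
`μ̂(l₁,l₂) = Σ_{j,k} u_{j,k} e^{-i l₁ x₁^j} e^{-i l₂ x₂^k}`
(without the `(2π)^{-2}` normalization) has absolute value at most `N`.
Here `e^{i n x}` for `x ∈ 𝕋 = ℝ/2πℤ` is `fourier n x`. -/
theorem fourierCoeff_dft_dirac_comb_le (N : ℕ) (hN : 0 < N)
    (x₁ x₂ : Fin N → AddCircle (2 * Real.pi))
    (u : Fin N → Fin N → ℂ)
    (hu : ∀ j k, u j k = (1 / Real.sqrt N) *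
      Complex.exp (2 * Real.pi * Complex.I * ((j.1 : ℂ) + 1) * ((k.1 : ℂ) + 1) / N))
    (l₁ l₂ : ℤ) :
    ‖∑ j : Fin N, ∑ k : Fin N,
        u j k * fourier (-l₁) (x₁ j) * fourier (-l₂) (x₂ k)‖ ≤ N := by
  set A : Fin N → ℂ := fun j => fourier (-l₁) (x₁ j) with hA
  set B : Fin N → ℂ := fun k => fourier (-l₂) (x₂ k) with hB
  set C : Fin N → ℂ := fun j => ∑ k, u j k * B k with hC
  have hAnorm : ∀ j, ‖A j‖ = 1 := fun j => by
    rw [hA]; simp only [fourier_apply]; exact Circle.norm_coe _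
  have hBnorm : ∀ k, ‖B k‖ = 1 := fun k => by
    rw [hB]; simp only [fourier_apply]; exact Circle.norm_coe _
  have hNR : (0:ℝ) < N := by exact_mod_cast hN
  -- unitarity of the DFT matrix
  have huu : ∀ k k' : Fin N, ∑ j : Fin N, u j k * (starRingEnd ℂ) (u j k')
      = if k = k' then (1:ℂ) else 0 := by
    intro k k'
    have key : ∀ j : Fin N, u j k * (starRingEnd ℂ) (u j k')
        = (((1 / Real.sqrt N : ℝ) : ℂ) * ((1 / Real.sqrt N : ℝ) : ℂ)) *
          (Complex.exp (2 * Real.pi * Complex.I * ((j.1 : ℂ) + 1) * ((k.1 : ℂ) + 1) / N) *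
           (starRingEnd ℂ)
             (Complex.exp (2 * Real.pi * Complex.I * ((j.1 : ℂ) + 1) * ((k'.1 : ℂ) + 1) / N))) := by
      intro j
      rw [hu j k, hu j k']
      simp only [map_mul, map_div₀, map_one, Complex.conj_ofReal]
      push_cast
      ring
    rw [Finset.sum_congr rfl fun j _ => key j, ← Finset.mul_sum, dft_orth N hN k k']
    have hss : ((1 / Real.sqrt N : ℝ) : ℂ) * ((1 / Real.sqrt N : ℝ) : ℂ) = 1 / (N : ℂ) := by
      rw [← Complex.ofReal_mul, div_mul_div_comm, one_mul, Real.mul_self_sqrt hNR.le]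
      push_cast
      ring
    rw [hss]
    by_cases h : k = k' <;> simp [h, Nat.cast_ne_zero.2 hN.ne']
  -- norm-squared of C sums to N
  have hc : ((∑ j : Fin N, ‖C j‖ ^ 2 : ℝ) : ℂ) = (N : ℂ) := by
    push_cast
    calc ∑ j : Fin N, ((‖C j‖ : ℂ)) ^ 2
        = ∑ j : Fin N, C j * (starRingEnd ℂ) (C j) :=
          Finset.sum_congr rfl fun j _ => (RCLike.mul_conj _).symm
      _ = ∑ j : Fin N, ∑ k : Fin N, ∑ k' : Fin N,
            (B k * (starRingEnd ℂ) (B k')) * (u j k * (starRingEnd ℂ) (u j k')) := by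
          refine Finset.sum_congr rfl fun j _ => ?_
          rw [hC]
          simp only [map_sum, map_mul, Finset.sum_mul, Finset.mul_sum]
          rw [Finset.sum_comm]
          exact Finset.sum_congr rfl fun k _ => Finset.sum_congr rfl fun k' _ => by ring
      _ = ∑ k : Fin N, ∑ k' : Fin N,
            (B k * (starRingEnd ℂ) (B k')) * ∑ j : Fin N, u j k * (starRingEnd ℂ) (u j k') := by
          rw [Finset.sum_comm]
          refine Finset.sum_congr rfl fun k _ => ?_
          rw [Finset.sum_comm]
          exact Finset.sum_congr rfl fun k' _ => by rw [← Finset.mul_sum]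
      _ = ∑ k : Fin N, ∑ k' : Fin N,
            (B k * (starRingEnd ℂ) (B k')) * (if k = k' then (1:ℂ) else 0) := by
          exact Finset.sum_congr rfl fun k _ => Finset.sum_congr rfl fun k' _ => by rw [huu]
      _ = ∑ k : Fin N, B k * (starRingEnd ℂ) (B k) := by
          simp [mul_ite, mul_one, mul_zero, Finset.sum_ite_eq]
      _ = ∑ k : Fin N, ((‖B k‖ : ℂ)) ^ 2 :=
          Finset.sum_congr rfl fun k _ => RCLike.mul_conj _
      _ = (N : ℂ) := by simp [hBnorm]
  have hCsq : ∑ j : Fin N, ‖C j‖ ^ 2 = (N : ℝ) := by exact_mod_cast hc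
  have hS : (∑ j : Fin N, ∑ k : Fin N, u j k * A j * B k) = ∑ j : Fin N, A j * C j := by
    refine Finset.sum_congr rfl fun j _ => ?_
    rw [hC, Finset.mul_sum]
    exact Finset.sum_congr rfl fun k _ => by ring
  rw [hS]
  calc ‖∑ j : Fin N, A j * C j‖ ≤ ∑ j : Fin N, ‖A j * C j‖ := norm_sum_le _ _
    _ = ∑ j : Fin N, 1 * ‖C j‖ := by
        refine Finset.sum_congr rfl fun j _ => ?_
        rw [norm_mul, hAnorm]
    _ ≤ Real.sqrt (∑ j : Fin N, (1:ℝ) ^ 2) * Real.sqrt (∑ j : Fin N, ‖C j‖ ^ 2) :=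
        Real.sum_mul_le_sqrt_mul_sqrt _ _ _
    _ = Real.sqrt N * Real.sqrt N := by rw [hCsq]; simp
    _ = N := Real.mul_self_sqrt hNR.le
end

section
/- There is no constant C > 0 such that for all N and all finite complex measures μ of the form μ = Σ_{j,k=1}^N u_{j,k} δ_{(x₁^j, x₂^k)} with u_{j,k} = (1/√N) exp(2πi jk/N) and distinct points x₁^1,...,x₁^N and distinct x₂^1,...,x₂^N in 𝕋, one has ‖μ‖ ≤ C · sup_{λ ∈ ℤ²} |μ̂(λ)|. In particular, for every C > 0 there exists N with N^{3/2} > C · N. -/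
open Complex

lemma geom_lemma (N : ℕ) (hN : 0 < N) (m : ℤ) :
    ∑ k : Fin N, (Complex.exp (2 * Real.pi * Complex.I * m / N)) ^ (k : ℕ)
      = if (N : ℤ) ∣ m then (N : ℂ) else 0 := by
  have hNc : (N : ℂ) ≠ 0 := by exact_mod_cast hN.ne'
  have hπ : (Real.pi : ℂ) ≠ 0 := by exact_mod_cast Real.pi_ne_zero
  have h2 : (2 * (Real.pi:ℂ) * Complex.I : ℂ) ≠ 0 := by
    simp [Complex.I_ne_zero, hπ]
  rw [Fin.sum_univ_eq_sum_range]
  by_cases h : (N : ℤ) ∣ m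
  · obtain ⟨q, rfl⟩ := h
    rw [if_pos ⟨q, rfl⟩]
    have e1 : (2 * (Real.pi:ℂ) * Complex.I * (((N:ℤ) * q : ℤ) : ℂ) / N) = q * (2 * Real.pi * Complex.I) := by
      push_cast
      field_simp
    rw [e1, Complex.exp_int_mul_two_pi_mul_I]
    simp
  · rw [if_neg h]
    have hx : Complex.exp (2 * Real.pi * Complex.I * m / N) ≠ 1 := by
      intro hx'
      rw [Complex.exp_eq_one_iff] at hx'
      obtain ⟨n, hn⟩ := hx'
      apply h
      refine ⟨n, ?_⟩
      have : (m : ℂ) = N * n := by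
        rw [div_eq_iff hNc] at hn
        exact mul_left_cancel₀ h2 (by linear_combination hn)
      exact_mod_cast this
    rw [geom_sum_eq hx]
    have e2 : Complex.exp (2 * Real.pi * Complex.I * m / N) ^ N = 1 := by
      rw [← Complex.exp_nat_mul]
      have e3 : (N:ℂ) * (2 * Real.pi * Complex.I * m / N) = m * (2 * Real.pi * Complex.I) := by
        field_simp
      rw [e3, Complex.exp_int_mul_two_pi_mul_I]
    rw [e2]
    simp


lemma finsupp_tv {ι α : Type*} [Fintype ι] (p : ι → α) (hp : Function.Injective p)
    (c : ι → ℂ) :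
    ((∑ i : ι, Finsupp.single (p i) (c i)).sum fun _ z => ‖z‖) = ∑ i : ι, ‖c i‖ := by
  classical
  set μ := ∑ i : ι, Finsupp.single (p i) (c i) with hμ
  have hval : ∀ i, μ (p i) = c i := by
    intro i
    rw [hμ, Finsupp.finset_sum_apply]
    rw [Finset.sum_eq_single i]
    · simp
    · intro b _ hb
      rw [Finsupp.single_apply, if_neg (fun hc => hb (hp hc))]
    · simp
  have hsub : μ.support ⊆ Finset.univ.image p := by
    refine Finsupp.support_finset_sum.trans ?_
    intro a ha
    simp only [Finset.mem_biUnion] at ha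
    obtain ⟨i, _, hi⟩ := ha
    have := Finsupp.support_single_subset hi
    simp only [Finset.mem_singleton] at this
    subst this
    exact Finset.mem_image_of_mem p (Finset.mem_univ i)
  rw [Finsupp.sum_of_support_subset μ hsub _ (fun a _ => norm_zero)]
  rw [Finset.sum_image (fun a _ b _ h => hp h)]
  exact Finset.sum_congr rfl fun i _ => by rw [hval i]

lemma key (N : ℕ) (hN : 0 < N) (l₁ l₂ : ℤ) :
    ‖∑ j : Fin N, ∑ k : Fin N,
      ((1 : ℂ) / Real.sqrt N *
          Complex.exp (2 * Real.pi * Complex.I * ((j.1 : ℂ) + 1) * ((k.1 : ℂ) + 1) / N)) *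
        fourier (-l₁) ((2 * Real.pi * j.1 / N : ℝ) : AddCircle (2 * Real.pi)) *
        fourier (-l₂) ((2 * Real.pi * k.1 / N : ℝ) : AddCircle (2 * Real.pi))‖
      = Real.sqrt N := by
  have hNc : (N : ℂ) ≠ 0 := by exact_mod_cast hN.ne'
  have hπ : (Real.pi : ℂ) ≠ 0 := by exact_mod_cast Real.pi_ne_zero
  have hfour : ∀ (n : ℤ) (r : ℝ),
      fourier n ((r : ℝ) : AddCircle (2 * Real.pi)) = Complex.exp (Complex.I * n * r) := by
    intro n r
    rw [fourier_coe_apply]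
    congr 1
    field_simp
    push_cast
    ring
  have hterm : ∀ j k : Fin N,
      ((1 : ℂ) / Real.sqrt N *
          Complex.exp (2 * Real.pi * Complex.I * ((j.1 : ℂ) + 1) * ((k.1 : ℂ) + 1) / N)) *
        fourier (-l₁) ((2 * Real.pi * j.1 / N : ℝ) : AddCircle (2 * Real.pi)) *
        fourier (-l₂) ((2 * Real.pi * k.1 / N : ℝ) : AddCircle (2 * Real.pi))
      = (1 : ℂ) / Real.sqrt N *
          Complex.exp (2 * Real.pi * Complex.I * (((j.1 : ℤ) + 1 - l₁ * j.1 : ℤ) : ℂ) / N) *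
          (Complex.exp (2 * Real.pi * Complex.I * (((j.1 : ℤ) + 1 - l₂ : ℤ) : ℂ) / N)) ^ (k.1) := by
    intro j k
    rw [hfour, hfour, ← Complex.exp_nat_mul]
    simp only [mul_assoc, ← Complex.exp_add]
    congr 2
    push_cast
    field_simp
    ring
  rw [Finset.sum_congr rfl fun j _ => Finset.sum_congr rfl fun k _ => hterm j k]
  have hinner : ∀ j : Fin N,
      ∑ k : Fin N, ((1 : ℂ) / Real.sqrt N *
          Complex.exp (2 * Real.pi * Complex.I * (((j.1 : ℤ) + 1 - l₁ * j.1 : ℤ) : ℂ) / N) *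
          (Complex.exp (2 * Real.pi * Complex.I * (((j.1 : ℤ) + 1 - l₂ : ℤ) : ℂ) / N)) ^ (k.1))
      = (1 : ℂ) / Real.sqrt N *
          Complex.exp (2 * Real.pi * Complex.I * (((j.1 : ℤ) + 1 - l₁ * j.1 : ℤ) : ℂ) / N) *
          (if (N : ℤ) ∣ ((j.1 : ℤ) + 1 - l₂) then (N : ℂ) else 0) := by
    intro j
    rw [← Finset.mul_sum, geom_lemma N hN _]
  rw [Finset.sum_congr rfl fun j _ => hinner j]
  -- the special index
  have h1 : 0 ≤ (l₂ - 1) % N := Int.emod_nonneg _ (by exact_mod_cast hN.ne')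
  have h2 : (l₂ - 1) % N < N := Int.emod_lt_of_pos _ (by exact_mod_cast hN)
  set j₀ : Fin N := ⟨((l₂ - 1) % N).toNat, by omega⟩ with hj₀
  have hj₀v : (j₀.1 : ℤ) = (l₂ - 1) % N := by
    simp [hj₀, Int.toNat_of_nonneg h1]
  have hd : (N : ℤ) ∣ ((j₀.1 : ℤ) + 1 - l₂) := by
    refine ⟨-((l₂ - 1) / N), ?_⟩
    rw [hj₀v, Int.emod_def]
    ring
  rw [Finset.sum_eq_single j₀]
  · -- norm of the surviving term
    rw [if_pos hd]
    set m₁ : ℤ := (j₀.1 : ℤ) + 1 - l₁ * j₀.1 with hm₁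
    have he : (2 * Real.pi * Complex.I * ((m₁ : ℤ) : ℂ) / N)
        = ((2 * Real.pi * m₁ / N : ℝ) : ℂ) * Complex.I := by
      push_cast
      ring
    rw [he]
    simp only [norm_mul, Complex.norm_exp_ofReal_mul_I, mul_one,
      norm_div, norm_one, Complex.norm_real, Real.norm_eq_abs, Complex.norm_natCast]
    rw [one_div, inv_mul_eq_div, _root_.abs_of_nonneg (Real.sqrt_nonneg _), Real.div_sqrt]
  · intro j _ hj
    rw [if_neg, mul_zero]
    rintro ⟨c, hc⟩
    obtain ⟨c₀, hc₀⟩ := hd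
    have hsub : (j.1 : ℤ) - (j₀.1 : ℤ) = N * (c - c₀) := by
      have := hc
      have := hc₀
      push_cast at *
      linarith [hc, hc₀, mul_sub (N:ℤ) c c₀]
    have habs : ((j.1 : ℤ) - (j₀.1 : ℤ)).natAbs < ((N:ℤ)).natAbs := by
      have := j.2
      have := j₀.2
      omega
    have := Int.eq_zero_of_dvd_of_natAbs_lt_natAbs ⟨c - c₀, hsub⟩ habs
    exact hj (Fin.ext (by omega))
  · simp


lemma finsupp_tv2 {α : Type*} (N : ℕ) (x y : Fin N → α)
    (hx : Function.Injective x) (hy : Function.Injective y) (c : Fin N → Fin N → ℂ) :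
    ((∑ j : Fin N, ∑ k : Fin N, Finsupp.single (x j, y k) (c j k)).sum fun _ z => ‖z‖)
      = ∑ j : Fin N, ∑ k : Fin N, ‖c j k‖ := by
  classical
  have hp : Function.Injective (fun i : Fin N × Fin N => (x i.1, y i.2)) := by
    rintro ⟨a1, a2⟩ ⟨b1, b2⟩ h
    simp only [Prod.mk.injEq] at h
    exact Prod.ext (hx h.1) (hy h.2)
  have := finsupp_tv (fun i : Fin N × Fin N => (x i.1, y i.2)) hp (fun i => c i.1 i.2)
  simpa [Fintype.sum_prod_type] using this

/-- There is no constant `C > 0` such that for all `N ≥ 1` and all discrete complex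
measures `μ = Σ_{j,k=1}^N u_{j,k} δ_{(x₁^j, x₂^k)}` on `𝕋²` with
`u_{j,k} = (1/√N) exp(2πi jk/N)` and distinct points `x₁^1,...,x₁^N` and distinct
`x₂^1,...,x₂^N`, one has `‖μ‖ ≤ C · sup_{λ ∈ ℤ²} |μ̂(λ)|`, where `‖μ‖` is the total
variation (sum of absolute values of the coefficients) and
`μ̂(λ) = Σ_{j,k} u_{j,k} e^{-i λ₁ x₁^j} e^{-i λ₂ x₂^k}`.
In particular, for every `C > 0` there exists `N` with `N^{3/2} > C · N`. -/
theorem no_uniform_helson_constant_for_products :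
    (¬ ∃ C : ℝ, 0 < C ∧ ∀ (N : ℕ), 0 < N →
      ∀ (x₁ x₂ : Fin N → AddCircle (2 * Real.pi)),
        Function.Injective x₁ → Function.Injective x₂ →
      ∀ (u : Fin N → Fin N → ℂ),
        (∀ j k, u j k = (1 / Real.sqrt N) *
          Complex.exp (2 * Real.pi * Complex.I * ((j.1 : ℂ) + 1) * ((k.1 : ℂ) + 1) / N)) →
      ∀ (μ : (AddCircle (2 * Real.pi) × AddCircle (2 * Real.pi)) →₀ ℂ),
        μ = (∑ j : Fin N, ∑ k : Fin N, Finsupp.single (x₁ j, x₂ k) (u j k)) →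
        (μ.sum fun _ z => ‖z‖) ≤ C * ⨆ l : ℤ × ℤ,
          ‖∑ j : Fin N, ∑ k : Fin N,
            u j k * fourier (-l.1) (x₁ j) * fourier (-l.2) (x₂ k)‖) ∧
    (∀ C : ℝ, 0 < C → ∃ N : ℕ, (N : ℝ) ^ ((3 : ℝ) / 2) > C * N) := by
  constructor
  · rintro ⟨C, hC, H⟩
    set N : ℕ := ⌈C⌉₊ + 1 with hNdef
    have hN : 0 < N := Nat.succ_pos _
    have hNR : (0 : ℝ) < N := by exact_mod_cast hN
    have hπ : (0 : ℝ) < Real.pi := Real.pi_pos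
    set x : Fin N → AddCircle (2 * Real.pi) :=
      fun j => ((2 * Real.pi * j.1 / N : ℝ) : AddCircle (2 * Real.pi)) with hx
    haveI : Fact (0 < 2 * Real.pi) := ⟨by positivity⟩
    have hinj : Function.Injective x := by
      intro j j' h
      have hmem : ∀ j : Fin N, (2 * Real.pi * j.1 / N : ℝ) ∈ Set.Ico (0:ℝ) (0 + 2 * Real.pi) := by
        intro j
        constructor
        · positivity
        · rw [zero_add]
          rw [div_lt_iff₀ hNR]
          have : (j.1 : ℝ) < N := by exact_mod_cast j.2
          nlinarith
      rw [hx] at h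
      have := (AddCircle.coe_eq_coe_iff_of_mem_Ico (hmem j) (hmem j')).1 h
      have hj : (j.1 : ℝ) = j'.1 := by
        field_simp [Real.pi_ne_zero] at this
        exact_mod_cast this
      exact Fin.ext (by exact_mod_cast hj)
    set u : Fin N → Fin N → ℂ := fun j k => (1 / Real.sqrt N) *
      Complex.exp (2 * Real.pi * Complex.I * ((j.1 : ℂ) + 1) * ((k.1 : ℂ) + 1) / N) with hu
    have hineq := H N hN x x hinj hinj u (fun j k => rfl)
      (∑ j : Fin N, ∑ k : Fin N, Finsupp.single (x j, x k) (u j k)) rfl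
    -- compute the total variation
    have hTV : ((∑ j : Fin N, ∑ k : Fin N, Finsupp.single (x j, x k) (u j k)).sum
        fun _ z => ‖z‖) = (N : ℝ) * N / Real.sqrt N := by
      rw [finsupp_tv2 N x x hinj hinj u]
      have hnorm : ∀ j k : Fin N, ‖u j k‖ = 1 / Real.sqrt N := by
        intro j k
        have hujk : u j k = (1 / (Real.sqrt N : ℂ)) *
            Complex.exp (2 * Real.pi * Complex.I * ((j.1 : ℂ) + 1) * ((k.1 : ℂ) + 1) / N) := rfl
        rw [hujk]
        have he : (2 * Real.pi * Complex.I * ((j.1 : ℂ) + 1) * ((k.1 : ℂ) + 1) / N)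
            = ((2 * Real.pi * (j.1 + 1) * (k.1 + 1) / N : ℝ) : ℂ) * Complex.I := by
          push_cast
          ring
        rw [he]
        simp only [norm_mul, Complex.norm_exp_ofReal_mul_I, mul_one,
          norm_div, norm_one, Complex.norm_real, Real.norm_eq_abs, _root_.abs_of_nonneg (Real.sqrt_nonneg _)]
      simp only [hnorm]
      simp only [Finset.sum_const, Finset.card_univ, Fintype.card_fin, nsmul_eq_mul]
      ring
    -- compute the Fourier supremum
    have hF : ∀ l : ℤ × ℤ, ‖∑ j : Fin N, ∑ k : Fin N,
        u j k * fourier (-l.1) (x j) * fourier (-l.2) (x k)‖ = Real.sqrt N :=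
      fun l => key N hN l.1 l.2
    rw [hTV] at hineq
    have hsup : (⨆ l : ℤ × ℤ, ‖∑ j : Fin N, ∑ k : Fin N,
        u j k * fourier (-l.1) (x j) * fourier (-l.2) (x k)‖) = Real.sqrt N := by
      simp only [hF]
      exact ciSup_const
    rw [hsup] at hineq
    -- contradiction
    have hs : Real.sqrt N > 0 := Real.sqrt_pos.2 hNR
    have hs2 : Real.sqrt N * Real.sqrt N = N := Real.mul_self_sqrt hNR.le
    have hNC : (N : ℝ) ≤ C := by
      rw [div_le_iff₀ hs] at hineq
      nlinarith
    have : C < N := by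
      have h1 : C ≤ (⌈C⌉₊ : ℝ) := Nat.le_ceil C
      have h2 : ((⌈C⌉₊ : ℕ) : ℝ) < ((⌈C⌉₊ + 1 : ℕ) : ℝ) := by exact_mod_cast Nat.lt_succ_self _
      calc C ≤ (⌈C⌉₊ : ℝ) := h1
        _ < N := by exact_mod_cast h2
    linarith
  · intro C hC
    refine ⟨⌈C ^ 2⌉₊ + 1, ?_⟩
    set N : ℕ := ⌈C ^ 2⌉₊ + 1 with hNdef
    have hNR : (0 : ℝ) < N := by positivity
    have hCN : C ^ 2 < N := by
      have h1 : C ^ 2 ≤ (⌈C ^ 2⌉₊ : ℝ) := Nat.le_ceil _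
      have h2 : ((⌈C ^ 2⌉₊ : ℕ) : ℝ) < ((⌈C ^ 2⌉₊ + 1 : ℕ) : ℝ) := by
        exact_mod_cast Nat.lt_succ_self _
      calc C ^ 2 ≤ (⌈C ^ 2⌉₊ : ℝ) := h1
        _ < N := by exact_mod_cast h2
    have hs : Real.sqrt N > 0 := Real.sqrt_pos.2 hNR
    have hs2 : Real.sqrt N * Real.sqrt N = N := Real.mul_self_sqrt hNR.le
    have hCs : C < Real.sqrt N := by
      nlinarith [Real.sqrt_nonneg (N : ℝ)]
    have hrpow : (N : ℝ) ^ ((3 : ℝ) / 2) = Real.sqrt N ^ 3 := by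
      rw [show ((3 : ℝ) / 2) = (1 / 2) * (3 : ℕ) by norm_num,
        Real.rpow_mul hNR.le, Real.rpow_natCast, ← Real.sqrt_eq_rpow]
    rw [hrpow]
    nlinarith
end

section
/- No subset of 𝕋² satisfying the Helson measure inequality (with some constant C) can contain a product X₁ × X₂ where X₁ and X₂ are infinite subsets of 𝕋. -/
open MeasureTheory Complex

/-- `E ⊆ 𝕋²` satisfies the Helson measure inequality with constant `C` if every
finite complex measure supported on `E` (encoded by its polar decomposition:
total variation measure `ν` and a unimodular density `f`) satisfies
`‖μ‖ ≤ C · sup_{λ ∈ ℤ²} |μ̂(λ)|`, where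
`μ̂(λ) = (2π)^{-2} ∫ e^{-i(λ₁t₁ + λ₂t₂)} f(t) dν(t)`. -/
def SatisfiesHelsonIneq (C : ℝ)
    (E : Set (AddCircle (2 * Real.pi) × AddCircle (2 * Real.pi))) : Prop :=
  ∀ (ν : Measure (AddCircle (2 * Real.pi) × AddCircle (2 * Real.pi)))
    (f : AddCircle (2 * Real.pi) × AddCircle (2 * Real.pi) → ℂ),
    IsFiniteMeasure ν → ν Eᶜ = 0 →
    AEStronglyMeasurable f ν → (∀ᵐ t ∂ν, ‖f t‖ = 1) →
    (ν Set.univ).toReal ≤ C * ⨆ l : ℤ × ℤ,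
      ((2 * Real.pi) ^ 2 : ℝ)⁻¹ *
        ‖∫ t, fourier (-l.1) t.1 * fourier (-l.2) t.2 * f t ∂ν‖

open Finset in
noncomputable section

noncomputable def helsonZeta (n : ℕ) : ℂ := Complex.exp ((2 * Real.pi / n : ℝ) * Complex.I)

lemma helsonZeta_abs (n : ℕ) : ‖helsonZeta n‖ = 1 :=
  Complex.norm_exp_ofReal_mul_I _

lemma helsonZeta_ne_zero (n : ℕ) : helsonZeta n ≠ 0 := Complex.exp_ne_zero _

lemma helsonZeta_pow_n (n : ℕ) (hn : 0 < n) : helsonZeta n ^ n = 1 := by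
  rw [helsonZeta, ← Complex.exp_nat_mul]
  rw [show (n : ℂ) * (((2 * Real.pi / n : ℝ) : ℂ) * Complex.I) = 2 * Real.pi * Complex.I by
    have hn' : (n : ℂ) ≠ 0 := Nat.cast_ne_zero.mpr hn.ne'
    push_cast
    field_simp]
  exact Complex.exp_two_pi_mul_I

lemma helsonZeta_zpow_eq_one (n : ℕ) (hn : 0 < n) (m : ℤ) (h : helsonZeta n ^ m = 1) :
    (n : ℤ) ∣ m := by
  rw [helsonZeta, ← Complex.exp_int_mul, Complex.exp_eq_one_iff] at h
  obtain ⟨k, hk⟩ := h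
  have hπ : (2 * Real.pi * Complex.I : ℂ) ≠ 0 := by
    simp [Real.pi_ne_zero, Complex.I_ne_zero]
  have hn' : (n : ℂ) ≠ 0 := Nat.cast_ne_zero.mpr hn.ne'
  have : (m : ℂ) = ((k * n : ℤ) : ℂ) := by
    have h2 : (m : ℂ) * (((2 * Real.pi / n : ℝ)) * Complex.I) = k * (2 * Real.pi * Complex.I) := hk
    push_cast at h2
    field_simp at h2
    have h3 : (m : ℂ) * (2 * Real.pi * Complex.I) = ((k * n : ℤ) : ℂ) * (2 * Real.pi * Complex.I) := by
      push_cast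
      linear_combination (2 * Real.pi * Complex.I) * h2
    exact mul_right_cancel₀ hπ h3
  have hint : m = k * n := by exact_mod_cast this
  exact ⟨k, by rw [hint]; ring⟩

lemma helson_geom_sum (n : ℕ) (hn : 0 < n) (m : ℤ) (hm : m ≠ 0) (hm' : m.natAbs < n) :
    ∑ j ∈ Finset.range n, (helsonZeta n ^ m) ^ j = 0 := by
  have hz1 : helsonZeta n ^ m ≠ 1 := by
    intro h
    obtain ⟨k, hk⟩ := helsonZeta_zpow_eq_one n hn m h
    rcases eq_or_ne k 0 with rfl | hk0
    · simp at hk; exact hm hk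
    · have : (n : ℤ) ≤ m.natAbs := by
        calc (n:ℤ) = n * 1 := by ring
        _ ≤ n * |k| := by
          have : (1:ℤ) ≤ |k| := Int.one_le_abs hk0
          exact mul_le_mul_of_nonneg_left this (by positivity)
        _ = |m| := by rw [hk, abs_mul, abs_of_nonneg (by positivity : (0:ℤ) ≤ (n:ℤ))]
        _ = m.natAbs := (Int.abs_eq_natAbs m)
      omega
  rw [geom_sum_eq hz1]
  have : (helsonZeta n ^ m) ^ n = 1 := by
    rw [← zpow_natCast (helsonZeta n ^ m), ← zpow_mul, mul_comm, zpow_mul, zpow_natCast,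
      helsonZeta_pow_n n hn, one_zpow]
  rw [this]
  simp

lemma helson_inner_sum (n : ℕ) (hn : 0 < n) (k k' : Fin n) :
    ∑ j : Fin n, helsonZeta n ^ ((j : ℕ) * (k : ℕ)) *
      (starRingEnd ℂ) (helsonZeta n ^ ((j : ℕ) * (k' : ℕ))) =
    if k = k' then (n : ℂ) else 0 := by
  have hz0 := helsonZeta_ne_zero n
  have hconj : ∀ a : ℕ, (starRingEnd ℂ) (helsonZeta n ^ a) = (helsonZeta n) ^ (-(a : ℤ)) := by
    intro a
    rw [← Complex.inv_eq_conj (by simp [map_pow, helsonZeta_abs]), zpow_neg, zpow_natCast]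
  have hterm : ∀ j : Fin n,
      helsonZeta n ^ ((j : ℕ) * (k : ℕ)) * (starRingEnd ℂ) (helsonZeta n ^ ((j : ℕ) * (k' : ℕ)))
      = (helsonZeta n ^ ((k : ℤ) - (k' : ℤ))) ^ (j : ℕ) := by
    intro j
    rw [hconj, ← zpow_natCast (helsonZeta n) ((j : ℕ) * (k : ℕ)), ← zpow_add₀ hz0,
      ← zpow_natCast (helsonZeta n ^ ((k : ℤ) - (k' : ℤ))) (j : ℕ), ← zpow_mul]
    congr 1
    push_cast
    ring
  simp only [hterm]
  rw [Fin.sum_univ_eq_sum_range (fun j => (helsonZeta n ^ ((k : ℤ) - (k' : ℤ))) ^ j)]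
  by_cases h : k = k'
  · subst h
    simp
  · rw [if_neg h]
    refine helson_geom_sum n hn _ ?_ ?_
    · intro h0
      apply h
      have : (k : ℤ) = (k' : ℤ) := by omega
      exact Fin.ext (by exact_mod_cast this)
    · have h1 : (k : ℤ) < n := by exact_mod_cast k.isLt
      have h2 : (k' : ℤ) < n := by exact_mod_cast k'.isLt
      omega

lemma helson_ortho (n : ℕ) (hn : 0 < n) (v : Fin n → ℂ) (hv : ∀ k, ‖v k‖ = 1) :
    ∑ j : Fin n, ‖∑ k : Fin n, helsonZeta n ^ ((j : ℕ) * (k : ℕ)) * v k‖ ^ 2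
      = (n : ℝ) ^ 2 := by
  have key : ∑ j : Fin n, (∑ k : Fin n, helsonZeta n ^ ((j : ℕ) * (k : ℕ)) * v k) *
      (starRingEnd ℂ) (∑ k : Fin n, helsonZeta n ^ ((j : ℕ) * (k : ℕ)) * v k)
      = ((n : ℂ)) ^ 2 := by
    have expand : ∀ j : Fin n,
        (∑ k : Fin n, helsonZeta n ^ ((j : ℕ) * (k : ℕ)) * v k) *
        (starRingEnd ℂ) (∑ k : Fin n, helsonZeta n ^ ((j : ℕ) * (k : ℕ)) * v k)
        = ∑ k : Fin n, ∑ k' : Fin n,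
            (helsonZeta n ^ ((j : ℕ) * (k : ℕ)) *
              (starRingEnd ℂ) (helsonZeta n ^ ((j : ℕ) * (k' : ℕ)))) *
            (v k * (starRingEnd ℂ) (v k')) := by
      intro j
      rw [map_sum, Finset.sum_mul_sum]
      refine Finset.sum_congr rfl fun k _ => Finset.sum_congr rfl fun k' _ => ?_
      rw [map_mul]
      ring
    simp only [expand]
    rw [Finset.sum_comm]
    have step : ∀ k : Fin n, (∑ j : Fin n, ∑ k' : Fin n,
        (helsonZeta n ^ ((j : ℕ) * (k : ℕ)) *
          (starRingEnd ℂ) (helsonZeta n ^ ((j : ℕ) * (k' : ℕ)))) *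
        (v k * (starRingEnd ℂ) (v k')))
        = ∑ k' : Fin n, (∑ j : Fin n, helsonZeta n ^ ((j : ℕ) * (k : ℕ)) *
            (starRingEnd ℂ) (helsonZeta n ^ ((j : ℕ) * (k' : ℕ)))) *
          (v k * (starRingEnd ℂ) (v k')) := by
      intro k
      rw [Finset.sum_comm]
      exact Finset.sum_congr rfl fun k' _ => (Finset.sum_mul _ _ _).symm
    simp only [step, helson_inner_sum n hn]
    have hvv : ∀ kk : Fin n, v kk * (starRingEnd ℂ) (v kk) = 1 := by
      intro kk
      rw [Complex.mul_conj]
      norm_cast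
      rw [Complex.normSq_eq_norm_sq, hv kk]
      norm_num
    have inner : ∀ k : Fin n, (∑ k' : Fin n,
        (if k = k' then (n : ℂ) else 0) * (v k * (starRingEnd ℂ) (v k'))) = (n : ℂ) := by
      intro k
      rw [Finset.sum_eq_single k]
      · rw [if_pos rfl, hvv, mul_one]
      · intro b _ hb
        rw [if_neg (Ne.symm hb), zero_mul]
      · intro h
        exact absurd (Finset.mem_univ k) h
    simp only [inner]
    rw [Finset.sum_const, Finset.card_univ, Fintype.card_fin, nsmul_eq_mul]
    ring
  have norms : ∀ j : Fin n, ‖∑ k : Fin n, helsonZeta n ^ ((j : ℕ) * (k : ℕ)) * v k‖ ^ 2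
      = ((∑ k : Fin n, helsonZeta n ^ ((j : ℕ) * (k : ℕ)) * v k) *
        (starRingEnd ℂ) (∑ k : Fin n, helsonZeta n ^ ((j : ℕ) * (k : ℕ)) * v k)).re := by
    intro j
    rw [Complex.mul_conj]
    simp [Complex.sq_norm]
  simp only [norms]
  rw [← Complex.re_sum, key]
  norm_cast

lemma helson_key_bound (n : ℕ) (hn : 0 < n) (u v : Fin n → ℂ)
    (hu : ∀ j, ‖u j‖ = 1) (hv : ∀ k, ‖v k‖ = 1) :
    ‖∑ p : Fin n × Fin n, u p.1 * helsonZeta n ^ ((p.1 : ℕ) * (p.2 : ℕ)) * v p.2‖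
      ≤ (n : ℝ) * Real.sqrt n := by
  set S : Fin n → ℂ := fun j => ∑ k : Fin n, helsonZeta n ^ ((j : ℕ) * (k : ℕ)) * v k with hS
  have hsplit : ∑ p : Fin n × Fin n, u p.1 * helsonZeta n ^ ((p.1 : ℕ) * (p.2 : ℕ)) * v p.2
      = ∑ j : Fin n, u j * S j := by
    rw [Fintype.sum_prod_type]
    refine Finset.sum_congr rfl fun j _ => ?_
    rw [hS, Finset.mul_sum]
    exact Finset.sum_congr rfl fun k _ => by ring
  rw [hsplit]
  have h1 : ‖∑ j : Fin n, u j * S j‖ ≤ ∑ j : Fin n, ‖S j‖ := by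
    refine (norm_sum_le _ _).trans ?_
    refine Finset.sum_le_sum fun j _ => ?_
    rw [norm_mul, hu j, one_mul]
  refine h1.trans ?_
  have h2 : (∑ j : Fin n, ‖S j‖) ^ 2 ≤ (n : ℝ) * ∑ j : Fin n, ‖S j‖ ^ 2 := by
    have := sq_sum_le_card_mul_sum_sq (s := (Finset.univ : Finset (Fin n)))
      (f := fun j => ‖S j‖)
    simpa [Finset.card_univ] using this
  rw [helson_ortho n hn v hv] at h2
  have h3 : (∑ j : Fin n, ‖S j‖) ^ 2 ≤ ((n : ℝ) * Real.sqrt n) ^ 2 := by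
    have : ((n : ℝ) * Real.sqrt n) ^ 2 = (n : ℝ) * (n : ℝ) ^ 2 := by
      rw [mul_pow, Real.sq_sqrt (by positivity)]
      ring
    rw [this]
    exact h2
  have hnon : (0 : ℝ) ≤ ∑ j : Fin n, ‖S j‖ := Finset.sum_nonneg fun j _ => norm_nonneg _
  have hb : (0 : ℝ) ≤ (n : ℝ) * Real.sqrt n := by positivity
  calc ∑ j : Fin n, ‖S j‖ = Real.sqrt ((∑ j : Fin n, ‖S j‖) ^ 2) := (Real.sqrt_sq hnon).symm
    _ ≤ Real.sqrt (((n : ℝ) * Real.sqrt n) ^ 2) := Real.sqrt_le_sqrt h3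
    _ = (n : ℝ) * Real.sqrt n := Real.sqrt_sq hb

open MeasureTheory

noncomputable section

local instance helsonMSC :
    MeasurableSingletonClass (AddCircle (2 * Real.pi) × AddCircle (2 * Real.pi)) :=
  Prod.instMeasurableSingletonClass

lemma helson_integrable_dirac (a : AddCircle (2 * Real.pi) × AddCircle (2 * Real.pi))
    (F : AddCircle (2 * Real.pi) × AddCircle (2 * Real.pi) → ℂ) (hF : Measurable F) :
    Integrable F (Measure.dirac a) := by
  refine ⟨hF.aestronglyMeasurable, ?_⟩
  rw [HasFiniteIntegral, MeasureTheory.lintegral_dirac]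
  exact ENNReal.coe_lt_top


/-- No subset of `𝕋²` satisfying the Helson measure inequality (with some
constant `C > 0`) can contain a Cartesian product `X₁ × X₂` of two infinite
subsets of `𝕋`. -/
theorem no_infinite_product_in_helson_set
    (E : Set (AddCircle (2 * Real.pi) × AddCircle (2 * Real.pi)))
    (C : ℝ) (hC : 0 < C) (hHelson : SatisfiesHelsonIneq C E)
    (X₁ X₂ : Set (AddCircle (2 * Real.pi)))
    (hX₁ : X₁.Infinite) (hX₂ : X₂.Infinite)
    (hprod : X₁ ×ˢ X₂ ⊆ E) : False := by
  classical
  set C' : ℝ := C * ((2 * Real.pi) ^ 2 : ℝ)⁻¹ with hC'def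
  have hπ : (0 : ℝ) < (2 * Real.pi) ^ 2 := by positivity
  have hC' : 0 < C' := by positivity
  set n : ℕ := Nat.ceil (C' ^ 2) + 1 with hndef
  have hn : 0 < n := Nat.succ_pos _
  -- distinct points in X₁ and X₂
  set x : Fin n → AddCircle (2 * Real.pi) :=
    fun j => (hX₁.natEmbedding X₁ (j : ℕ) : AddCircle (2 * Real.pi)) with hx
  set y : Fin n → AddCircle (2 * Real.pi) :=
    fun k => (hX₂.natEmbedding X₂ (k : ℕ) : AddCircle (2 * Real.pi)) with hy
  have hxmem : ∀ j, x j ∈ X₁ := fun j => (hX₁.natEmbedding X₁ (j : ℕ)).2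
  have hymem : ∀ k, y k ∈ X₂ := fun k => (hX₂.natEmbedding X₂ (k : ℕ)).2
  have hxinj : Function.Injective x := by
    intro a b h
    exact Fin.ext ((hX₁.natEmbedding X₁).injective (Subtype.ext h))
  have hyinj : Function.Injective y := by
    intro a b h
    exact Fin.ext ((hX₂.natEmbedding X₂).injective (Subtype.ext h))
  set atom : Fin n × Fin n → AddCircle (2 * Real.pi) × AddCircle (2 * Real.pi) :=
    fun p => (x p.1, y p.2) with hatom
  have hatominj : Function.Injective atom := by
    intro p q h
    have h1 : x p.1 = x q.1 := congrArg Prod.fst h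
    have h2 : y p.2 = y q.2 := congrArg Prod.snd h
    exact Prod.ext (hxinj h1) (hyinj h2)
  have hatomE : ∀ p, atom p ∈ E := fun p => hprod ⟨hxmem p.1, hymem p.2⟩
  -- the measure and the unimodular density
  set ν : Measure (AddCircle (2 * Real.pi) × AddCircle (2 * Real.pi)) :=
    ∑ p : Fin n × Fin n, Measure.dirac (atom p) with hν
  set g : Fin n × Fin n → ℂ := fun p => helsonZeta n ^ ((p.1 : ℕ) * (p.2 : ℕ)) with hg
  have hgnorm : ∀ p, ‖g p‖ = 1 := by
    intro p
    rw [hg]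
    simp [map_pow, helsonZeta_abs]
  set f : AddCircle (2 * Real.pi) × AddCircle (2 * Real.pi) → ℂ :=
    fun t => (∑ p : Fin n × Fin n, Set.indicator {atom p} (fun _ => g p - 1) t) + 1 with hf
  have hfatom : ∀ q, f (atom q) = g q := by
    intro q
    rw [hf]
    simp only
    rw [Finset.sum_eq_single q]
    · simp
    · intro p _ hp
      rw [Set.indicator_of_notMem]
      simp only [Set.mem_singleton_iff]
      intro h
      exact hp (hatominj h).symm
    · intro h
      exact absurd (Finset.mem_univ q) h
  have hfmeas : Measurable f := by
    apply Measurable.add _ measurable_const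
    apply Finset.measurable_sum
    intro p _
    exact measurable_const.indicator (measurableSet_singleton _)
  -- measure computations
  have hν_apply : ∀ s, ν s = ∑ p : Fin n × Fin n, Measure.dirac (atom p) s := by
    intro s
    rw [hν]
    exact Measure.finset_sum_apply _ _ _
  have hνuniv : ν Set.univ = (n * n : ℕ) := by
    rw [hν_apply]
    simp [Measure.dirac_apply, Finset.card_univ]
  have hfin : IsFiniteMeasure ν := by
    constructor
    rw [hνuniv]
    exact ENNReal.natCast_lt_top _
  have hνE : ν Eᶜ = 0 := by
    rw [hν_apply]
    refine Finset.sum_eq_zero fun p _ => ?_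
    rw [Measure.dirac_apply]
    exact Set.indicator_of_notMem (by simp [hatomE p]) _
  have hae : ∀ᵐ t ∂ν, ‖f t‖ = 1 := by
    rw [MeasureTheory.ae_iff]
    rw [hν_apply]
    refine Finset.sum_eq_zero fun p _ => ?_
    rw [Measure.dirac_apply]
    refine Set.indicator_of_notMem ?_ _
    simp only [Set.mem_setOf_eq, not_not]
    rw [hfatom p]
    exact hgnorm p
  -- the Fourier coefficient bound
  have hbound : ∀ l : ℤ × ℤ,
      ‖∫ t, fourier (-l.1) t.1 * fourier (-l.2) t.2 * f t ∂ν‖ ≤ (n : ℝ) * Real.sqrt n := by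
    intro l
    set F : AddCircle (2 * Real.pi) × AddCircle (2 * Real.pi) → ℂ :=
      fun t => fourier (-l.1) t.1 * fourier (-l.2) t.2 * f t with hF
    have hFmeas : Measurable F := by
      apply Measurable.mul _ hfmeas
      exact (((map_continuous (fourier (-l.1))).measurable).comp measurable_fst).mul
        (((map_continuous (fourier (-l.2))).measurable).comp measurable_snd)
    have hint : ∫ t, F t ∂ν = ∑ p : Fin n × Fin n, F (atom p) := by
      rw [hν, integral_finset_sum_measure (fun p _ => helson_integrable_dirac _ F hFmeas)]
      exact Finset.sum_congr rfl fun p _ => integral_dirac F (atom p)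
    rw [show (∫ t, fourier (-l.1) t.1 * fourier (-l.2) t.2 * f t ∂ν) = ∫ t, F t ∂ν from rfl,
      hint]
    set u : Fin n → ℂ := fun j => fourier (-l.1) (x j) with hu
    set v : Fin n → ℂ := fun k => fourier (-l.2) (y k) with hv
    have hsum : ∑ p : Fin n × Fin n, F (atom p)
        = ∑ p : Fin n × Fin n, u p.1 * helsonZeta n ^ ((p.1 : ℕ) * (p.2 : ℕ)) * v p.2 := by
      refine Finset.sum_congr rfl fun p _ => ?_
      rw [hF]
      simp only
      rw [hfatom p, hg]
      ring
    rw [hsum]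
    refine helson_key_bound n hn u v ?_ ?_
    · intro j
      rw [hu]
      simp [fourier_apply, Circle.norm_coe]
    · intro k
      rw [hv]
      simp [fourier_apply, Circle.norm_coe]
  -- apply the Helson inequality
  have hmain := hHelson ν f hfin hνE hfmeas.aestronglyMeasurable hae
  have hsup : (⨆ l : ℤ × ℤ, ((2 * Real.pi) ^ 2 : ℝ)⁻¹ *
      ‖∫ t, fourier (-l.1) t.1 * fourier (-l.2) t.2 * f t ∂ν‖)
      ≤ ((2 * Real.pi) ^ 2 : ℝ)⁻¹ * ((n : ℝ) * Real.sqrt n) := by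
    refine ciSup_le fun l => ?_
    exact mul_le_mul_of_nonneg_left (hbound l) (by positivity)
  have huniv : (ν Set.univ).toReal = (n : ℝ) * n := by
    rw [hνuniv]
    simp
  rw [huniv] at hmain
  have hfinal : (n : ℝ) * n ≤ C' * ((n : ℝ) * Real.sqrt n) := by
    calc (n : ℝ) * n ≤ C * (((2 * Real.pi) ^ 2 : ℝ)⁻¹ * ((n : ℝ) * Real.sqrt n)) :=
          hmain.trans (mul_le_mul_of_nonneg_left hsup hC.le)
      _ = C' * ((n : ℝ) * Real.sqrt n) := by rw [hC'def]; ring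
  -- derive √n ≤ C'
  have hsqrt : Real.sqrt n ≤ C' := by
    have hpos : (0 : ℝ) < (n : ℝ) * Real.sqrt n := by
      have : (0 : ℝ) < (n : ℝ) := by exact_mod_cast hn
      positivity
    have hnn : (n : ℝ) * n = ((n : ℝ) * Real.sqrt n) * Real.sqrt n := by
      rw [mul_assoc, Real.mul_self_sqrt (by positivity)]
    rw [hnn] at hfinal
    have := (mul_le_mul_iff_right₀ hpos).mp (by linarith [hfinal] : ((n : ℝ) * Real.sqrt n) * Real.sqrt n ≤ ((n : ℝ) * Real.sqrt n) * C')
    linarith [this]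
  -- but √n > C'
  have hgt : C' < Real.sqrt n := by
    rw [show (Real.sqrt n) = Real.sqrt ((n : ℝ)) from rfl]
    rw [← Real.sqrt_sq hC'.le]
    apply Real.sqrt_lt_sqrt (by positivity)
    have h1 : C' ^ 2 ≤ (Nat.ceil (C' ^ 2) : ℝ) := Nat.le_ceil _
    have h2 : ((Nat.ceil (C' ^ 2) : ℕ) : ℝ) < n := by
      rw [hndef]
      push_cast
      linarith
    linarith
  linarith

end
end
end
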